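/- Let S ∈ ℝ^{n×n} with S ≻ 0, Ω ∈ ℝ^{n×n} with Ω ≻ 0, and F, H ∈ ℝ^{n×n} with S·F + Fᵀ·S ⪯ −S·Ω·S. Let ω₁ be the smallest eigenvalue of the symmetric matrix S·Ω·S, let ω₂ > 0 satisfy ω₂ ≥ 2·‖S·H‖, and let σ ∈ (0, ω₁/ω₂). Then there exist c₁ ≥ 1 and c₂, c₃ > 0 such that for every bounded continuous d : [0,∞) → ℝⁿ, every continuous e : [0,∞) → ℝⁿ, and every differentiable x : [0,∞) → ℝⁿ satisfying x′(t) = F·x(t) + H·e(t) + d(t) and ‖e(t)‖ ≤ σ·(‖x(t)‖ + sup_{s∈[0,t]}‖d(s)‖) for all t ≥ 0, one has ‖x(t)‖ ≤ c₁·e^{−c₂·t}·‖x(0)‖ + c₃·sup_{s∈[0,t]}‖d(s)‖ for all t ≥ 0. -/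

import Mathlib

open Matrix

/-- The operator norm on square matrices induced by the Euclidean norm
(spectral norm). -/
noncomputable def l2opNorm {n : ℕ} (A : Matrix (Fin n) (Fin n) ℝ) : ℝ :=
  ‖(Matrix.toEuclideanCLM (𝕜 := ℝ) A :
      EuclideanSpace ℝ (Fin n) →L[ℝ] EuclideanSpace ℝ (Fin n))‖

section Aux

lemma stmt18_inner_toCLM {n : ℕ} (A : Matrix (Fin n) (Fin n) ℝ) (y z : EuclideanSpace ℝ (Fin n)) :
    (inner ℝ y ((Matrix.toEuclideanCLM (𝕜 := ℝ) A) z) : ℝ) = (⇑y) ⬝ᵥ (A *ᵥ ⇑z) := by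
  have h : (Matrix.toEuclideanCLM (𝕜 := ℝ) A) z =
      (EuclideanSpace.equiv (Fin n) ℝ).symm (A *ᵥ ⇑z) := rfl
  rw [h]
  simp [PiLp.inner_apply, dotProduct, mul_comm]

lemma stmt18_dot_symm {n : ℕ} {S : Matrix (Fin n) (Fin n) ℝ} (hS : Sᵀ = S) (u w : Fin n → ℝ) :
    u ⬝ᵥ (S *ᵥ w) = w ⬝ᵥ (S *ᵥ u) := by
  rw [Matrix.dotProduct_mulVec, ← Matrix.mulVec_transpose, hS, dotProduct_comm]

lemma stmt18_sqrt_add_le (a b : ℝ) (ha : 0 ≤ a) (hb : 0 ≤ b) :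
    Real.sqrt (a + b) ≤ Real.sqrt a + Real.sqrt b := by
  have h : a + b ≤ (Real.sqrt a + Real.sqrt b) ^ 2 := by
    nlinarith [Real.sq_sqrt ha, Real.sq_sqrt hb, Real.sqrt_nonneg a, Real.sqrt_nonneg b,
      mul_nonneg (Real.sqrt_nonneg a) (Real.sqrt_nonneg b)]
  calc Real.sqrt (a + b) ≤ Real.sqrt ((Real.sqrt a + Real.sqrt b) ^ 2) := Real.sqrt_le_sqrt h
    _ = Real.sqrt a + Real.sqrt b := Real.sqrt_sq (by positivity)

lemma stmt18_rayleigh_lower {n : ℕ} {A : Matrix (Fin n) (Fin n) ℝ} (hA : A.IsHermitian) {c : ℝ}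
    (hc : ∀ i, c ≤ hA.eigenvalues i) (x : EuclideanSpace ℝ (Fin n)) :
    c * ‖x‖ ^ 2 ≤ (⇑x) ⬝ᵥ (A *ᵥ ⇑x) := by
  classical
  set b := hA.eigenvectorBasis with hb
  have hAT : Aᵀ = A := by
    have := hA.eq
    rwa [Matrix.conjTranspose_eq_transpose_of_trivial] at this
  set y : EuclideanSpace ℝ (Fin n) := (EuclideanSpace.equiv (Fin n) ℝ).symm (A *ᵥ ⇑x) with hy
  have hby : ∀ i, (inner ℝ (b i) y : ℝ) = hA.eigenvalues i * inner ℝ (b i) x := by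
    intro i
    have h1 : (inner ℝ (b i) y : ℝ) = (⇑(b i)) ⬝ᵥ (A *ᵥ ⇑x) := by
      simp [hy, PiLp.inner_apply, dotProduct, mul_comm]
    have h2 : (⇑(b i)) ⬝ᵥ (A *ᵥ ⇑x) = (A *ᵥ ⇑(b i)) ⬝ᵥ ⇑x := by
      rw [Matrix.dotProduct_mulVec, ← Matrix.mulVec_transpose, hAT]
    rw [h1, h2, hA.mulVec_eigenvectorBasis, smul_dotProduct]
    have : (⇑(b i)) ⬝ᵥ ⇑x = (inner ℝ (b i) x : ℝ) := by
      simp [PiLp.inner_apply, dotProduct, mul_comm]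
    rw [this]; rfl
  have hxy : (⇑x) ⬝ᵥ (A *ᵥ ⇑x) = (inner ℝ x y : ℝ) := by
    simp [hy, PiLp.inner_apply, dotProduct, mul_comm]
  have hsum := b.sum_inner_mul_inner x y
  have hsum2 := b.sum_inner_mul_inner x x
  have hnorm : ‖x‖ ^ 2 = ∑ i, (inner ℝ x (b i) : ℝ) * inner ℝ (b i) x := by
    rw [hsum2, real_inner_self_eq_norm_sq]
  have hxy2 : (⇑x) ⬝ᵥ (A *ᵥ ⇑x)
      = ∑ i, hA.eigenvalues i * ((inner ℝ x (b i) : ℝ) * inner ℝ (b i) x) := by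
    rw [hxy, ← hsum]
    congr 1; funext i
    rw [hby i]; ring
  rw [hxy2, hnorm, Finset.mul_sum]
  apply Finset.sum_le_sum
  intro i _
  have hsq : (0:ℝ) ≤ (inner ℝ x (b i) : ℝ) * inner ℝ (b i) x := by
    rw [real_inner_comm x (b i)]; exact mul_self_nonneg _
  exact mul_le_mul_of_nonneg_right (hc i) hsq

end Aux

set_option maxHeartbeats 1000000 in
theorem stmt_18 (n : ℕ) (hn : 0 < n)
    (S Ω F H : Matrix (Fin n) (Fin n) ℝ) (hS : S.PosDef) (hΩ : Ω.PosDef)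
    (hLyap : (-(S * Ω * S) - (S * F + Fᵀ * S)).PosSemidef)
    (hHerm : (S * Ω * S).IsHermitian)
    (ω₁ ω₂ : ℝ)
    (hω₁ : IsLeast (Set.range hHerm.eigenvalues) ω₁)
    (hω₂ : 0 < ω₂) (hω₂H : 2 * l2opNorm (S * H) ≤ ω₂)
    (σ : ℝ) (hσ : σ ∈ Set.Ioo 0 (ω₁ / ω₂)) :
    ∃ c₁ c₂ c₃ : ℝ, 1 ≤ c₁ ∧ 0 < c₂ ∧ 0 < c₃ ∧
      ∀ d e x : ℝ → EuclideanSpace ℝ (Fin n),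
        ContinuousOn d (Set.Ici 0) →
        (∃ Cd : ℝ, ∀ t ∈ Set.Ici (0 : ℝ), ‖d t‖ ≤ Cd) →
        ContinuousOn e (Set.Ici 0) →
        (∀ t ∈ Set.Ici (0 : ℝ),
          HasDerivWithinAt x
            ((EuclideanSpace.equiv (Fin n) ℝ).symm
                (F.mulVec (x t) + H.mulVec (e t)) + d t)
            (Set.Ici 0) t) →
        (∀ t ∈ Set.Ici (0 : ℝ),
          ‖e t‖ ≤ σ * (‖x t‖ + sSup ((fun u => ‖d u‖) '' Set.Icc 0 t))) →
        ∀ t ∈ Set.Ici (0 : ℝ),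
          ‖x t‖ ≤ c₁ * Real.exp (-c₂ * t) * ‖x 0‖ +
            c₃ * sSup ((fun u => ‖d u‖) '' Set.Icc 0 t) := by
  classical
  have hFin : Nonempty (Fin n) := ⟨⟨0, hn⟩⟩
  -- basic matrix facts
  have hST : Sᵀ = S := by
    have := hS.1.eq
    rwa [Matrix.conjTranspose_eq_transpose_of_trivial] at this
  -- smallest eigenvalue of S
  set m : ℝ := Finset.univ.inf' Finset.univ_nonempty hS.1.eigenvalues with hm_def
  have hm_le : ∀ i, m ≤ hS.1.eigenvalues i := fun i =>
    Finset.inf'_le _ (Finset.mem_univ i)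
  have hm_pos : 0 < m := by
    obtain ⟨i, _, hi⟩ := Finset.exists_mem_eq_inf' Finset.univ_nonempty hS.1.eigenvalues
    rw [hm_def, hi]
    exact hS.eigenvalues_pos i
  -- operator norms
  set TS := Matrix.toEuclideanCLM (𝕜 := ℝ) S with hTS_def
  set opS : ℝ := ‖TS‖ with hopS_def
  -- quadratic form bounds for S
  have hq_lower : ∀ z : EuclideanSpace ℝ (Fin n), m * ‖z‖ ^ 2 ≤ (inner ℝ z (TS z) : ℝ) := by
    intro z
    rw [stmt18_inner_toCLM]
    exact stmt18_rayleigh_lower hS.1 hm_le z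
  have hq_upper : ∀ z : EuclideanSpace ℝ (Fin n), (inner ℝ z (TS z) : ℝ) ≤ opS * ‖z‖ ^ 2 := by
    intro z
    calc (inner ℝ z (TS z) : ℝ) ≤ ‖z‖ * ‖TS z‖ := real_inner_le_norm _ _
      _ ≤ ‖z‖ * (opS * ‖z‖) := by
          exact mul_le_mul_of_nonneg_left (TS.le_opNorm z) (norm_nonneg z)
      _ = opS * ‖z‖ ^ 2 := by ring
  have hm_le_opS : m ≤ opS := by
    set z := EuclideanSpace.single (⟨0, hn⟩ : Fin n) (1 : ℝ) with hz
    have hz1 : ‖z‖ = 1 := by simp [hz, EuclideanSpace.norm_single]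
    have h1 := hq_lower z
    have h2 := hq_upper z
    rw [hz1] at h1 h2
    simpa using h1.trans h2
  have hopS_pos : 0 < opS := lt_of_lt_of_le hm_pos hm_le_opS
  -- eigenvalue bound for S Ω S
  have hω₁_le : ∀ i, ω₁ ≤ hHerm.eigenvalues i := fun i => hω₁.2 ⟨i, rfl⟩
  obtain ⟨hσ0, hσ1⟩ := hσ
  have hω₁_pos : 0 < ω₁ := by
    have h := hσ0.trans hσ1
    have := (div_pos_iff.mp h)
    rcases this with ⟨h1, _⟩ | ⟨_, h2⟩
    · exact h1
    · linarith
  -- constants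
  set α : ℝ := ω₁ - σ * ω₂ with hα_def
  have hα_pos : 0 < α := by
    have h2 : σ * ω₂ < ω₁ := (lt_div_iff₀ hω₂).mp hσ1
    simp only [hα_def]; linarith
  set γ : ℝ := σ * ω₂ + 2 * opS with hγ_def
  have hγ_pos : 0 < γ := by positivity
  set K : ℝ := α / (2 * opS) with hK_def
  have hK_pos : 0 < K := by positivity
  refine ⟨Real.sqrt (opS / m), K / 2, γ / Real.sqrt (2 * α * m * K), ?_, by positivity, ?_, ?_⟩
  · rw [show (1:ℝ) = Real.sqrt 1 from (Real.sqrt_one).symm]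
    apply Real.sqrt_le_sqrt
    rw [le_div_iff₀ hm_pos]; linarith
  · have : 0 < Real.sqrt (2 * α * m * K) := Real.sqrt_pos.mpr (by positivity)
    positivity
  intro d e x hd hdbdd he hx hebnd t ht
  clear_value K γ α opS TS m
  have ht0 : (0:ℝ) ≤ t := ht
  obtain ⟨Cd, hCd⟩ := hdbdd
  set D : ℝ := sSup ((fun u => ‖d u‖) '' Set.Icc 0 t) with hD_def
  have hne : ((fun u => ‖d u‖) '' Set.Icc 0 t).Nonempty := ⟨‖d 0‖, ⟨0, ⟨le_rfl, ht0⟩, rfl⟩⟩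
  have hbdd : BddAbove ((fun u => ‖d u‖) '' Set.Icc 0 t) := by
    refine ⟨Cd, ?_⟩
    rintro y ⟨u, hu, rfl⟩
    exact hCd u hu.1
  have hD0 : 0 ≤ D := le_trans (norm_nonneg (d 0)) (le_csSup hbdd ⟨0, ⟨le_rfl, ht0⟩, rfl⟩)
  have hdD : ∀ s ∈ Set.Icc (0:ℝ) t, ‖d s‖ ≤ D := fun s hs => le_csSup hbdd ⟨s, hs, rfl⟩
  have hDs : ∀ s ∈ Set.Icc (0:ℝ) t, sSup ((fun u => ‖d u‖) '' Set.Icc 0 s) ≤ D := by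
    intro s hs
    refine csSup_le_csSup hbdd ⟨‖d 0‖, ⟨0, ⟨le_rfl, hs.1⟩, rfl⟩⟩
      (Set.image_mono (Set.Icc_subset_Icc le_rfl hs.2))
  clear_value D
  set φ : ℝ → EuclideanSpace ℝ (Fin n) := fun u =>
    (EuclideanSpace.equiv (Fin n) ℝ).symm (F.mulVec (x u) + H.mulVec (e u)) + d u with hφ_def
  set v : ℝ → ℝ := fun u => (inner ℝ (x u) (TS (x u)) : ℝ) with hv_def
  set v' : ℝ → ℝ := fun u => 2 * (inner ℝ (x u) (TS (φ u)) : ℝ) with hv'_def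
  have hφcoe : ∀ s : ℝ, ⇑(φ s) = (F *ᵥ ⇑(x s) + H *ᵥ ⇑(e s)) + ⇑(d s) := fun s => rfl
  have hxφ : ∀ s ∈ Set.Ici (0:ℝ), HasDerivWithinAt x (φ s) (Set.Ici 0) s := hx
  have hsymm : ∀ (y z : EuclideanSpace ℝ (Fin n)), (inner ℝ y (TS z) : ℝ) = inner ℝ z (TS y) := by
    intro y z
    rw [hTS_def, stmt18_inner_toCLM, stmt18_inner_toCLM]
    exact stmt18_dot_symm hST _ _
  have hv_deriv : ∀ s ∈ Set.Ici (0:ℝ), HasDerivWithinAt v (v' s) (Set.Ici 0) s := by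
    intro s hs
    have hxd := hxφ s hs
    have hTx : HasDerivWithinAt (fun u => TS (x u)) (TS (φ s)) (Set.Ici 0) s :=
      TS.hasFDerivAt.comp_hasDerivWithinAt s hxd
    have h2 : v' s = (inner ℝ (x s) (TS (φ s)) : ℝ) + (inner ℝ (φ s) (TS (x s)) : ℝ) := by
      rw [hsymm (φ s) (x s)]; simp only [hv'_def]; ring
    rw [show HasDerivWithinAt v (v' s) (Set.Ici 0) s ↔ True from iff_of_true ?_ trivial]
    · trivial
    rw [h2]
    exact hxd.inner ℝ hTx
  have hxc : ContinuousOn x (Set.Ici 0) := fun u hu => (hx u hu).continuousWithinAt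
  have hvc : ContinuousOn v (Set.Icc 0 t) :=
    (hxc.inner ((TS.continuous.comp_continuousOn hxc))).mono Set.Icc_subset_Ici_self
  set ε : ℝ := γ ^ 2 / (2 * α) * D ^ 2 with hε_def
  have hε0 : 0 ≤ ε := by rw [hε_def]; positivity
  clear_value φ v v' ε
  have hbound : ∀ s ∈ Set.Ico (0:ℝ) t, v' s ≤ (-K) * v s + ε := by
    intro s hs
    have hs' : s ∈ Set.Ici (0:ℝ) := hs.1
    have hsIcc : s ∈ Set.Icc (0:ℝ) t := ⟨hs.1, hs.2.le⟩
    have hX0 : (0:ℝ) ≤ ‖x s‖ := norm_nonneg _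
    -- expand v' s
    have hexpand : v' s = 2 * (⇑(x s) ⬝ᵥ ((S * F) *ᵥ ⇑(x s))) + 2 * (⇑(x s) ⬝ᵥ ((S * H) *ᵥ ⇑(e s)))
        + 2 * (⇑(x s) ⬝ᵥ (S *ᵥ ⇑(d s))) := by
      rw [hv'_def]
      simp only
      rw [hTS_def, stmt18_inner_toCLM, hφcoe s]
      rw [Matrix.mulVec_add, Matrix.mulVec_add, dotProduct_add, dotProduct_add,
        Matrix.mulVec_mulVec, Matrix.mulVec_mulVec]
      ring
    -- symmetrize the quadratic term
    have hSF : ⇑(x s) ⬝ᵥ ((S * F) *ᵥ ⇑(x s)) = ⇑(x s) ⬝ᵥ ((Fᵀ * S) *ᵥ ⇑(x s)) := by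
      rw [Matrix.dotProduct_mulVec, ← Matrix.mulVec_transpose, Matrix.transpose_mul, hST,
        dotProduct_comm]
    have hquad : 2 * (⇑(x s) ⬝ᵥ ((S * F) *ᵥ ⇑(x s)))
        = ⇑(x s) ⬝ᵥ ((S * F + Fᵀ * S) *ᵥ ⇑(x s)) := by
      rw [Matrix.add_mulVec, dotProduct_add]
      nlinarith [hSF]
    -- Lyapunov inequality
    have hLy := hLyap.dotProduct_mulVec_nonneg ⇑(x s)
    rw [star_trivial] at hLy
    have hLy2 : ⇑(x s) ⬝ᵥ ((S * F + Fᵀ * S) *ᵥ ⇑(x s))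
        ≤ - (⇑(x s) ⬝ᵥ ((S * Ω * S) *ᵥ ⇑(x s))) := by
      rw [Matrix.sub_mulVec, Matrix.neg_mulVec, dotProduct_sub,
        dotProduct_neg] at hLy
      linarith
    have hray : ω₁ * ‖x s‖ ^ 2 ≤ ⇑(x s) ⬝ᵥ ((S * Ω * S) *ᵥ ⇑(x s)) :=
      stmt18_rayleigh_lower hHerm hω₁_le (x s)
    -- cross terms
    have hSH : ⇑(x s) ⬝ᵥ ((S * H) *ᵥ ⇑(e s)) ≤ ‖x s‖ * (l2opNorm (S * H) * ‖e s‖) := by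
      have h1 : ⇑(x s) ⬝ᵥ ((S * H) *ᵥ ⇑(e s))
          = (inner ℝ (x s) ((Matrix.toEuclideanCLM (𝕜 := ℝ) (S * H)) (e s)) : ℝ) :=
        (stmt18_inner_toCLM _ _ _).symm
      rw [h1]
      calc (inner ℝ (x s) ((Matrix.toEuclideanCLM (𝕜 := ℝ) (S * H)) (e s)) : ℝ)
          ≤ ‖x s‖ * ‖(Matrix.toEuclideanCLM (𝕜 := ℝ) (S * H)) (e s)‖ := real_inner_le_norm _ _
        _ ≤ ‖x s‖ * (l2opNorm (S * H) * ‖e s‖) :=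
            mul_le_mul_of_nonneg_left
              ((Matrix.toEuclideanCLM (𝕜 := ℝ) (S * H)).le_opNorm (e s)) hX0
    have hSd : ⇑(x s) ⬝ᵥ (S *ᵥ ⇑(d s)) ≤ ‖x s‖ * (opS * ‖d s‖) := by
      have h1 : ⇑(x s) ⬝ᵥ (S *ᵥ ⇑(d s)) = (inner ℝ (x s) (TS (d s)) : ℝ) := by
        rw [hTS_def, stmt18_inner_toCLM]
      rw [h1]
      calc (inner ℝ (x s) (TS (d s)) : ℝ) ≤ ‖x s‖ * ‖TS (d s)‖ := real_inner_le_norm _ _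
        _ ≤ ‖x s‖ * (opS * ‖d s‖) := by
            refine mul_le_mul_of_nonneg_left ?_ hX0
            rw [hopS_def]
            exact TS.le_opNorm (d s)
    -- triggering bound
    have hE : ‖e s‖ ≤ σ * (‖x s‖ + D) := by
      have h1 := hebnd s hs'
      have h2 := hDs s hsIcc
      calc ‖e s‖ ≤ σ * (‖x s‖ + sSup ((fun u => ‖d u‖) '' Set.Icc 0 s)) := h1
        _ ≤ σ * (‖x s‖ + D) := by
            apply mul_le_mul_of_nonneg_left _ hσ0.le
            exact add_le_add le_rfl h2
    have hE0 : 0 ≤ ‖e s‖ := norm_nonneg _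
    have hd0 : 0 ≤ ‖d s‖ := norm_nonneg _
    have hdDs : ‖d s‖ ≤ D := hdD s hsIcc
    have hNSH : 0 ≤ l2opNorm (S * H) := norm_nonneg _
    -- combine
    have hXv : v s ≤ opS * ‖x s‖ ^ 2 := by rw [hv_def]; exact hq_upper (x s)
    have hstep : v' s ≤ -α * ‖x s‖ ^ 2 + γ * ‖x s‖ * D := by
      rw [hexpand]
      have c1 : 2 * (⇑(x s) ⬝ᵥ ((S * F) *ᵥ ⇑(x s))) ≤ -(ω₁ * ‖x s‖ ^ 2) := by
        rw [hquad]; linarith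
      have c2 : 2 * (⇑(x s) ⬝ᵥ ((S * H) *ᵥ ⇑(e s))) ≤ ω₂ * (‖x s‖ * ‖e s‖) := by
        nlinarith [hSH, mul_le_mul_of_nonneg_right hω₂H (mul_nonneg hX0 hE0)]
      have c2' : ω₂ * (‖x s‖ * ‖e s‖) ≤ ω₂ * (‖x s‖ * (σ * (‖x s‖ + D))) := by
        apply mul_le_mul_of_nonneg_left _ hω₂.le
        exact mul_le_mul_of_nonneg_left hE hX0
      have c3 : 2 * (⇑(x s) ⬝ᵥ (S *ᵥ ⇑(d s))) ≤ 2 * opS * (‖x s‖ * D) := by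
        have h2 : ‖x s‖ * (opS * ‖d s‖) ≤ ‖x s‖ * (opS * D) := by
          apply mul_le_mul_of_nonneg_left _ hX0
          exact mul_le_mul_of_nonneg_left hdDs hopS_pos.le
        nlinarith [hSd]
      rw [hα_def, hγ_def]
      nlinarith [c1, c2, c2', c3]
    have hyoung : γ * ‖x s‖ * D ≤ α / 2 * ‖x s‖ ^ 2 + γ ^ 2 / (2 * α) * D ^ 2 := by
      rw [show α / 2 * ‖x s‖ ^ 2 + γ ^ 2 / (2 * α) * D ^ 2
            = α / 2 * ‖x s‖ ^ 2 + γ ^ 2 * D ^ 2 / (2 * α) by ring,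
        ← sub_le_iff_le_add', le_div_iff₀ (by linarith : (0:ℝ) < 2 * α)]
      nlinarith [sq_nonneg (α * ‖x s‖ - γ * D)]
    have hKv : K * v s ≤ α / 2 * ‖x s‖ ^ 2 := by
      have hKopS : K * opS = α / 2 := by
        rw [hK_def]; field_simp
      calc K * v s ≤ K * (opS * ‖x s‖ ^ 2) := mul_le_mul_of_nonneg_left hXv hK_pos.le
        _ = α / 2 * ‖x s‖ ^ 2 := by rw [← mul_assoc, hKopS]
    rw [hε_def]
    linarith [hstep, hyoung, hKv]
  -- slope condition for Gronwall
  have hslope : ∀ s ∈ Set.Ico (0:ℝ) t, ∀ r, v' s < r →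
      ∃ᶠ z in nhdsWithin s (Set.Ioi s), (z - s)⁻¹ * (v z - v s) < r := by
    intro s hs r hr
    have hds : HasDerivWithinAt v (v' s) (Set.Ici s) s :=
      (hv_deriv s hs.1).mono (Set.Ici_subset_Ici.mpr hs.1)
    have htend := hasDerivWithinAt_iff_tendsto_slope.mp hds
    rw [Set.Ici_sdiff_left] at htend
    have hev : ∀ᶠ z in nhdsWithin s (Set.Ioi s), slope v s z < r :=
      htend.eventually_lt_const hr
    refine (hev.mono fun z hz => ?_).frequently
    rwa [slope_def_field, div_eq_inv_mul] at hz
  -- Gronwall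
  have hgron := le_gronwallBound_of_liminf_deriv_right_le hvc hslope (le_refl (v 0)) hbound
    t ⟨ht0, le_rfl⟩
  rw [sub_zero, gronwallBound_of_K_ne_0 (neg_ne_zero.mpr hK_pos.ne')] at hgron
  have hexp1 : Real.exp (-K * t) ≤ 1 := Real.exp_le_one_iff.mpr (by nlinarith [mul_nonneg hK_pos.le ht0])
  have hexpPos : 0 < Real.exp (-K * t) := Real.exp_pos _
  have hvt : v t ≤ v 0 * Real.exp (-K * t) + ε / K := by
    have h2 : ε / -K * (Real.exp (-K * t) - 1) ≤ ε / K := by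
      rw [div_neg]
      have h3 : 0 ≤ ε / K := div_nonneg hε0 hK_pos.le
      nlinarith
    linarith
  -- convert to norm bound
  have hlow : m * ‖x t‖ ^ 2 ≤ v t := by rw [hv_def]; exact hq_lower (x t)
  have hup0 : v 0 ≤ opS * ‖x 0‖ ^ 2 := by rw [hv_def]; exact hq_upper (x 0)
  have hxt2 : ‖x t‖ ^ 2 ≤ opS / m * Real.exp (-K * t) * ‖x 0‖ ^ 2 + ε / (m * K) := by
    have h1 : m * ‖x t‖ ^ 2 ≤ opS * ‖x 0‖ ^ 2 * Real.exp (-K * t) + ε / K := by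
      calc m * ‖x t‖ ^ 2 ≤ v t := hlow
        _ ≤ v 0 * Real.exp (-K * t) + ε / K := hvt
        _ ≤ opS * ‖x 0‖ ^ 2 * Real.exp (-K * t) + ε / K := by
            have := mul_le_mul_of_nonneg_right hup0 hexpPos.le
            linarith
    have heq : m * (opS / m * Real.exp (-K * t) * ‖x 0‖ ^ 2 + ε / (m * K))
        = opS * ‖x 0‖ ^ 2 * Real.exp (-K * t) + ε / K := by
      field_simp
    have h2 := h1.trans_eq heq.symm
    exact le_of_mul_le_mul_left h2 hm_pos
  set A : ℝ := opS / m * Real.exp (-K * t) * ‖x 0‖ ^ 2 with hA_def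
  set B : ℝ := ε / (m * K) with hB_def
  have hA0 : 0 ≤ A := by
    rw [hA_def]
    exact mul_nonneg (mul_nonneg (div_nonneg hopS_pos.le hm_pos.le) (Real.exp_pos _).le)
      (sq_nonneg _)
  have hB0 : 0 ≤ B := by
    rw [hB_def]
    exact div_nonneg hε0 (mul_pos hm_pos hK_pos).le
  have hxt : ‖x t‖ ≤ Real.sqrt (A + B) := by
    rw [show Real.sqrt (A + B) = Real.sqrt (A + B) from rfl]
    have := Real.sqrt_le_sqrt hxt2
    calc ‖x t‖ = Real.sqrt (‖x t‖ ^ 2) := (Real.sqrt_sq (norm_nonneg _)).symm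
      _ ≤ Real.sqrt (A + B) := Real.sqrt_le_sqrt hxt2
  have hsA : Real.sqrt A = Real.sqrt (opS / m) * Real.exp (-(K / 2) * t) * ‖x 0‖ := by
    rw [hA_def, Real.sqrt_mul (mul_nonneg (div_nonneg hopS_pos.le hm_pos.le) (Real.exp_pos _).le),
      Real.sqrt_mul (div_nonneg hopS_pos.le hm_pos.le), Real.sqrt_sq (norm_nonneg _),
      ← Real.exp_half]
    ring_nf
  have hsB : Real.sqrt B = γ / Real.sqrt (2 * α * m * K) * D := by
    have hpos : (0:ℝ) < 2 * α * m * K :=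
      mul_pos (mul_pos (by linarith) hm_pos) hK_pos
    have hsq : Real.sqrt (2 * α * m * K) ^ 2 = 2 * α * m * K := Real.sq_sqrt hpos.le
    have hB_eq : B = (γ / Real.sqrt (2 * α * m * K) * D) ^ 2 := by
      rw [hB_def, hε_def]
      rw [mul_pow, div_pow, hsq]
      field_simp
      try ring
      try exact Or.inl trivial
    rw [hB_eq, Real.sqrt_sq
      (mul_nonneg (div_nonneg hγ_pos.le (Real.sqrt_nonneg _)) hD0)]
  calc ‖x t‖ ≤ Real.sqrt (A + B) := hxt
    _ ≤ Real.sqrt A + Real.sqrt B := stmt18_sqrt_add_le A B hA0 hB0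
    _ = Real.sqrt (opS / m) * Real.exp (-(K / 2) * t) * ‖x 0‖
        + γ / Real.sqrt (2 * α * m * K) * D := by rw [hsA, hsB]
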